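/- The set D := { (a, s) ∈ ℝ² : φ_a(s) < +∞ } is open, and φ : D → ℝ, (a,s) ↦ φ_a(s), is continuous (in fact C¹). -/

import Mathlib

open Set Filter Topology

/-- `u c s` is the solution of `-(p·u')' + q·u = c·w·u` with `u c s s = 0` and
`(u c s)' s = 1/(p s)`; `u'` is its `t`-derivative. -/
def IsSolFamily (p q w : ℝ → ℝ) (u u' : ℝ → ℝ → ℝ → ℝ) : Prop :=
  ∀ c s : ℝ, u c s s = 0 ∧ u' c s s = 1 / p s ∧
    ∀ t : ℝ, HasDerivAt (u c s) (u' c s t) t ∧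
      HasDerivAt (fun τ => p τ * u' c s τ) (q t * u c s t - c * w t * u c s t) t

/-- Zero set of `u c s` strictly after `s`. -/
def zeroSet (u : ℝ → ℝ → ℝ → ℝ) (c s : ℝ) : Set ℝ := {t | s < t ∧ u c s t = 0}

private lemma no_double_zero (p q m : ℝ → ℝ) (u u' : ℝ → ℝ → ℝ → ℝ)
    (hp : Continuous p) (hq : Continuous q) (hm : Continuous m)
    (hppos : ∀ t, 0 < p t)
    (hsol : IsSolFamily p q m u u')
    (c s t : ℝ) (hst : s ≤ t) (h0 : u c s t = 0) (h0' : u' c s t = 0) : False := by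
  obtain ⟨hss, hs1, hODE⟩ := hsol c s
  set v : ℝ → ℝ × ℝ := fun τ => (u c s τ, p τ * u' c s τ) with hv_def
  have hv : ∀ τ, HasDerivAt v
      (u' c s τ, q τ * u c s τ - c * m τ * u c s τ) τ :=
    fun τ => ((hODE τ).1).prodMk ((hODE τ).2)
  set w : ℝ → ℝ × ℝ := fun τ => v (s + t - τ) with hw_def
  have hg : ∀ τ : ℝ, HasDerivAt (fun τ : ℝ => s + t - τ) (-1) τ := fun τ => by
    simpa using (hasDerivAt_id τ).const_sub (s + t)
  have hw : ∀ τ, HasDerivAt w ((-1 : ℝ) •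
      (u' c s (s+t-τ), q (s+t-τ) * u c s (s+t-τ) - c * m (s+t-τ) * u c s (s+t-τ))) τ :=
    fun τ => (hv (s+t-τ)).scomp τ (hg τ)
  obtain ⟨τP, hτPmem, hτP⟩ := isCompact_Icc.exists_isMinOn (nonempty_Icc.2 hst) hp.continuousOn
  have hPpos : 0 < p τP := hppos τP
  obtain ⟨τM, hτMmem, hτM⟩ := isCompact_Icc.exists_isMaxOn (nonempty_Icc.2 hst)
    ((hq.sub (continuous_const.mul hm)).abs.continuousOn)
  set K := max (1 / p τP) (|q τM - c * m τM|) with hK_def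
  have hcont : Continuous w := continuous_iff_continuousAt.2 fun τ => (hw τ).continuousAt
  have hbound : ∀ x ∈ Ico s t, ‖(-1 : ℝ) •
      (u' c s (s+t-x), q (s+t-x) * u c s (s+t-x) - c * m (s+t-x) * u c s (s+t-x))‖
        ≤ K * ‖w x‖ + 0 := by
    intro x hx
    have hσ : s + t - x ∈ Icc s t := ⟨by linarith [hx.2], by linarith [hx.1]⟩
    set σ := s + t - x
    have hp1 : |u' c s σ| ≤ 1 / p τP * ‖v σ‖ := by
      have h1 : |u' c s σ| = 1 / p σ * |p σ * u' c s σ| := by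
        rw [abs_mul, abs_of_pos (hppos σ)]; field_simp
        rw [mul_div_assoc, div_self (hppos σ).ne', mul_one]
      have h2 : |p σ * u' c s σ| ≤ ‖v σ‖ := by
        rw [Prod.norm_def]; exact le_max_of_le_right (le_of_eq (Real.norm_eq_abs _).symm)
      have h3 : 1 / p σ ≤ 1 / p τP := one_div_le_one_div_of_le hPpos (hτP hσ)
      calc |u' c s σ| = 1 / p σ * |p σ * u' c s σ| := h1
        _ ≤ 1 / p τP * ‖v σ‖ :=
          mul_le_mul h3 h2 (abs_nonneg _) (by positivity)
    have hp2 : |q σ * u c s σ - c * m σ * u c s σ| ≤ |q τM - c * m τM| * ‖v σ‖ := by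
      have h1 : q σ * u c s σ - c * m σ * u c s σ = (q σ - c * m σ) * u c s σ := by ring
      have h2 : |u c s σ| ≤ ‖v σ‖ := by
        rw [Prod.norm_def]; exact le_max_of_le_left (le_of_eq (Real.norm_eq_abs _).symm)
      rw [h1, abs_mul]
      exact mul_le_mul (hτM hσ) h2 (abs_nonneg _) (abs_nonneg _)
    rw [norm_smul]
    simp only [norm_neg, norm_one, one_mul, add_zero]
    have hwv : ‖w x‖ = ‖v σ‖ := rfl
    rw [hwv, Prod.norm_def, Real.norm_eq_abs, Real.norm_eq_abs]
    apply max_le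
    · exact hp1.trans (mul_le_mul_of_nonneg_right (le_max_left _ _) (norm_nonneg _))
    · exact hp2.trans (mul_le_mul_of_nonneg_right (le_max_right _ _) (norm_nonneg _))
  have hws : ‖w s‖ ≤ 0 := by
    have : w s = v t := by simp [hw_def]
    rw [this]
    have : v t = (0, 0) := by simp [hv_def, h0, h0']
    rw [this]; simp
  have key := norm_le_gronwallBound_of_norm_deriv_right_le (δ := 0) (K := K) (ε := 0)
    hcont.continuousOn (fun x _ => (hw x).hasDerivWithinAt) hws hbound t ⟨hst, le_rfl⟩
  rw [gronwallBound_ε0_δ0] at key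
  have hwt : w t = (0, 1) := by
    have : w t = v s := by simp [hw_def]
    rw [this]
    have : p s * u' c s s = 1 := by
      rw [hs1]; field_simp
      exact div_self (hppos s).ne'
    simp [hv_def, hss, this]
  rw [hwt] at key
  simp [Prod.norm_def] at key
  linarith

/-- The domain `D = {(a,s) : φ_a(s) < +∞}` is open and
`(a,s) ↦ φ_a(s)` is continuous on `D`. -/
theorem zero_function_domain_open_and_continuous
    (p q m : ℝ → ℝ) (u u' : ℝ → ℝ → ℝ → ℝ)
    (hp : Continuous p) (hq : Continuous q) (hm : Continuous m)
    (hppos : ∀ t, 0 < p t) (hqnn : ∀ t, 0 ≤ q t)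
    (hsol : IsSolFamily p q m u u')
    (hu : Continuous fun x : ℝ × ℝ × ℝ => u x.1 x.2.1 x.2.2)
    (hu' : Continuous fun x : ℝ × ℝ × ℝ => u' x.1 x.2.1 x.2.2) :
    IsOpen {as : ℝ × ℝ | (zeroSet u as.1 as.2).Nonempty} ∧
      ContinuousOn (fun as : ℝ × ℝ => sInf (zeroSet u as.1 as.2))
        {as : ℝ × ℝ | (zeroSet u as.1 as.2).Nonempty} := by
  have cont1 : ∀ c σ : ℝ, Continuous (u c σ) := fun c σ =>
    continuous_iff_continuousAt.2 fun τ => ((hsol c σ).2.2 τ).1.continuousAt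
  have main : ∀ a s : ℝ, (zeroSet u a s).Nonempty → ∀ ε > 0,
      ∀ᶠ z : ℝ × ℝ in 𝓝 (a, s), (zeroSet u z.1 z.2).Nonempty ∧
        |sInf (zeroSet u z.1 z.2) - sInf (zeroSet u a s)| < ε := by
    intro a s hne ε hε
    -- positivity of u' near (a,s,s)
    have h0 : (0:ℝ) < u' a s s := by
      rw [(hsol a s).2.1]; exact one_div_pos.2 (hppos s)
    have hUopen : IsOpen {x : ℝ × ℝ × ℝ | 0 < u' x.1 x.2.1 x.2.2} :=
      isOpen_lt continuous_const hu'
    obtain ⟨r, hrpos, hr⟩ := Metric.isOpen_iff.1 hUopen (a, s, s) h0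
    -- Claim A : positivity just after σ
    have claimA : ∀ c σ : ℝ, |c - a| < r → |σ - s| < r/2 →
        ∀ t, σ < t → t ≤ s + r/2 → 0 < u c σ t := by
      intro c σ hc hσ t ht1 ht2
      have hder : ∀ τ ∈ Icc σ t, 0 < u' c σ τ := by
        intro τ hτ
        have hσ' := abs_lt.1 hσ
        have hmem : ((c, σ, τ) : ℝ × ℝ × ℝ) ∈ Metric.ball (a, s, s) r := by
          rw [Metric.mem_ball, Prod.dist_eq, Prod.dist_eq,
            Real.dist_eq, Real.dist_eq, Real.dist_eq]
          have h1 : |τ - s| < r := by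
            rw [abs_lt]
            constructor
            · have := hτ.1; linarith
            · have := hτ.2; linarith
          have h2 : |σ - s| < r := by rw [abs_lt]; constructor <;> linarith
          exact max_lt hc (max_lt h2 h1)
        exact hr hmem
      have hmono : StrictMonoOn (u c σ) (Icc σ t) := by
        apply strictMonoOn_of_deriv_pos (convex_Icc σ t) (cont1 c σ).continuousOn
        intro τ hτ
        rw [interior_Icc] at hτ
        rw [((hsol c σ).2.2 τ).1.deriv]
        exact hder τ ⟨hτ.1.le, hτ.2.le⟩
      have := hmono (left_mem_Icc.2 ht1.le) (right_mem_Icc.2 ht1.le) ht1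
      rwa [(hsol c σ).1] at this
    have hA0 : ∀ t, s < t → t ≤ s + r/2 → 0 < u a s t := fun t h1 h2 =>
      claimA a s (by simpa using hrpos) (by simpa using half_pos hrpos) t h1 h2
    set φ := sInf (zeroSet u a s) with hφ_def
    have hlb : ∀ t ∈ zeroSet u a s, s + r/2 < t := by
      rintro t ⟨ht, hz⟩
      by_contra h
      push_neg at h
      exact absurd hz (ne_of_gt (hA0 t ht h))
    have hbdd : BddBelow (zeroSet u a s) := ⟨s + r/2, fun t ht => (hlb t ht).le⟩
    have hφ_ge : s + r/2 ≤ φ := le_csInf hne fun t ht => (hlb t ht).le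
    have hsφ : s < φ := by linarith
    have hφmem : φ ∈ zeroSet u a s := by
      refine ⟨hsφ, ?_⟩
      have hclosed : IsClosed {t : ℝ | u a s t = 0} :=
        isClosed_eq (cont1 a s) continuous_const
      have h1 : closure (zeroSet u a s) ⊆ {t : ℝ | u a s t = 0} :=
        closure_minimal (fun t ht => ht.2) hclosed
      exact h1 (csInf_mem_closure hne hbdd)
    have hsr2φ : s + r/2 < φ := hlb φ hφmem
    have hpos : ∀ t, s < t → t < φ → 0 < u a s t := by
      intro t h1 h2
      by_contra h
      push_neg at h
      rcases le_or_gt t (s + r/2) with h3 | h3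
      · exact absurd (hA0 t h1 h3) (not_lt.2 h)
      · have huA : 0 < u a s (s + r/2) := hA0 (s + r/2) (by linarith) le_rfl
        have hivt := intermediate_value_Icc' h3.le (cont1 a s).continuousOn
          (show (0:ℝ) ∈ Icc (u a s t) (u a s (s + r/2)) from ⟨h, huA.le⟩)
        obtain ⟨z0, hz0mem, hz0⟩ := hivt
        have : φ ≤ z0 := csInf_le hbdd ⟨by linarith [hz0mem.1], hz0⟩
        linarith [hz0mem.2]
    have hslope := hasDerivAt_iff_tendsto_slope.1 ((hsol a s).2.2 φ).1
    have hu'φ : u' a s φ < 0 := by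
      have hne0 : u' a s φ ≠ 0 := fun h =>
        no_double_zero p q m u u' hp hq hm hppos hsol a s φ hsφ.le hφmem.2 h
      refine lt_of_le_of_ne ?_ hne0
      have h1 : Tendsto (slope (u a s) φ) (𝓝[<] φ) (𝓝 (u' a s φ)) :=
        hslope.mono_left (nhdsWithin_mono φ fun x hx => ne_of_lt hx)
      refine le_of_tendsto h1 ?_
      filter_upwards [Ioo_mem_nhdsLT_of_mem (⟨hsφ, le_rfl⟩ : φ ∈ Ioc s φ)] with t ht
      rw [slope_def_field, hφmem.2, sub_zero]
      exact div_nonpos_of_nonneg_of_nonpos (hpos t ht.1 ht.2).le (by linarith [ht.2])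
    have hnegs : ∀ᶠ t in 𝓝[>] φ, u a s t < 0 := by
      have h1 : Tendsto (slope (u a s) φ) (𝓝[>] φ) (𝓝 (u' a s φ)) :=
        hslope.mono_left (nhdsWithin_mono φ fun x hx => ne_of_gt hx)
      have h2 : ∀ᶠ t in 𝓝[>] φ, slope (u a s) φ t < 0 :=
        h1.eventually (Iio_mem_nhds hu'φ)
      filter_upwards [h2, self_mem_nhdsWithin] with t h2t h3t
      rw [slope_def_field, hφmem.2, sub_zero] at h2t
      rcases div_neg_iff.1 h2t with ⟨_, h4⟩ | ⟨h4, _⟩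
      · exact absurd h4 (not_lt.2 (by simp at h3t; linarith))
      · exact h4
    obtain ⟨t₀, ht₀, hsub⟩ := mem_nhdsGT_iff_exists_Ioo_subset.1 hnegs
    rw [mem_Ioi] at ht₀
    -- choose the two cut points
    set t₁ := (φ + min t₀ (φ + ε)) / 2 with ht₁_def
    have hmin : φ < min t₀ (φ + ε) := lt_min ht₀ (by linarith)
    have ht₁φ : φ < t₁ := by
      rw [ht₁_def]; linarith
    have ht₁t₀ : t₁ < t₀ := by
      have := min_le_left t₀ (φ + ε); rw [ht₁_def]; linarith
    have ht₁ε : t₁ < φ + ε := by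
      have := min_le_right t₀ (φ + ε); rw [ht₁_def]; linarith
    have ht₁u : u a s t₁ < 0 := hsub ⟨ht₁φ, ht₁t₀⟩
    set t₂ := max (s + r/2) (φ - ε/2) with ht₂_def
    have ht₂1 : s + r/2 ≤ t₂ := le_max_left _ _
    have ht₂2 : t₂ < φ := max_lt hsr2φ (by linarith)
    have ht₂3 : φ - ε < t₂ := lt_of_lt_of_le (by linarith) (le_max_right _ _)
    -- tube lemma around {(a,s)} × [s+r/2, t₂]
    have hgcont : Continuous (fun y : (ℝ × ℝ) × ℝ => u y.1.1 y.1.2 y.2) :=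
      hu.comp (((continuous_fst.comp continuous_fst).prodMk
        ((continuous_snd.comp continuous_fst).prodMk continuous_snd)))
    have hnopen : IsOpen {y : (ℝ × ℝ) × ℝ | 0 < u y.1.1 y.1.2 y.2} :=
      isOpen_lt continuous_const hgcont
    obtain ⟨V, W, hVopen, _, hVmem, hWsub, hVW⟩ := generalized_tube_lemma
      (isCompact_singleton : IsCompact {((a, s) : ℝ × ℝ)}) (isCompact_Icc (a := s + r/2) (b := t₂)) hnopen
      (by
        rintro ⟨z, t⟩ ⟨hz, ht⟩
        rw [mem_singleton_iff] at hz
        subst hz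
        show 0 < u a s t
        have h1 : s < t := by have := ht.1; linarith
        exact hpos t h1 (lt_of_le_of_lt ht.2 ht₂2))
    have hVn : V ∈ 𝓝 (a, s) := hVopen.mem_nhds (hVmem rfl)
    have hV3 : {z : ℝ × ℝ | u z.1 z.2 t₁ < 0} ∈ 𝓝 (a, s) := by
      have hcont3 : Continuous (fun z : ℝ × ℝ => u z.1 z.2 t₁) :=
        hu.comp (continuous_fst.prodMk (continuous_snd.prodMk continuous_const))
      exact (isOpen_lt hcont3 continuous_const).mem_nhds ht₁u
    have hV1 : (Metric.ball a r ×ˢ Metric.ball s (r/2)) ∈ 𝓝 (a, s) :=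
      prod_mem_nhds (Metric.ball_mem_nhds a hrpos) (Metric.ball_mem_nhds s (half_pos hrpos))
    filter_upwards [hVn, hV3, hV1] with z hzV hz3 hz1
    obtain ⟨c, σ⟩ := z
    have hc : |c - a| < r := by
      have := hz1.1; rwa [Metric.mem_ball, Real.dist_eq] at this
    have hσ : |σ - s| < r/2 := by
      have := hz1.2; rwa [Metric.mem_ball, Real.dist_eq] at this
    have hσlt : σ < s + r/2 := by
      rw [abs_lt] at hσ; linarith
    have hcA : ∀ t, σ < t → t ≤ s + r/2 → 0 < u c σ t := claimA c σ hc hσ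
    have hposK : ∀ t ∈ Icc (s + r/2) t₂, 0 < u c σ t := by
      intro t ht
      have hmem2 : ((c, σ), t) ∈ V ×ˢ W := mk_mem_prod hzV (hWsub ht)
      exact hVW hmem2
    have hzero_gt : ∀ t ∈ zeroSet u c σ, t₂ < t := by
      rintro t ⟨htσ, ht0⟩
      by_contra h
      push_neg at h
      rcases le_or_gt t (s + r/2) with h1 | h1
      · exact absurd ht0 (ne_of_gt (hcA t htσ h1))
      · exact absurd ht0 (ne_of_gt (hposK t ⟨h1.le, h⟩))
    have huA : 0 < u c σ (s + r/2) := hcA (s + r/2) hσlt le_rfl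
    have hab : s + r/2 ≤ t₁ := by linarith
    have hivt := intermediate_value_Icc' hab (cont1 c σ).continuousOn
      (show (0:ℝ) ∈ Icc (u c σ t₁) (u c σ (s + r/2)) from ⟨hz3.le, huA.le⟩)
    obtain ⟨z0, hz0mem, hz0⟩ := hivt
    have hz0zero : z0 ∈ zeroSet u c σ := ⟨by linarith [hz0mem.1], hz0⟩
    have hnonempty : (zeroSet u c σ).Nonempty := ⟨z0, hz0zero⟩
    refine ⟨hnonempty, ?_⟩
    have hbdd' : BddBelow (zeroSet u c σ) := ⟨σ, fun x hx => hx.1.le⟩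
    have hup : sInf (zeroSet u c σ) ≤ z0 := csInf_le hbdd' hz0zero
    have hlow : t₂ ≤ sInf (zeroSet u c σ) :=
      le_csInf hnonempty fun t ht => (hzero_gt t ht).le
    rw [abs_lt]
    constructor
    · linarith
    · linarith [hz0mem.2]
  constructor
  · rw [isOpen_iff_mem_nhds]
    rintro ⟨a, s⟩ h
    have := (main a s h 1 one_pos).mono fun z hz => hz.1
    exact this
  · rintro ⟨a, s⟩ h
    apply ContinuousAt.continuousWithinAt
    rw [ContinuousAt, Metric.tendsto_nhds]
    intro ε hε
    filter_upwards [main a s h ε hε] with z hz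
    rw [Real.dist_eq]
    exact hz.2
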